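/- For every real alpha >= 1 there exists a constant C_alpha < infinity (depending only on alpha, w, y, the parameter box, and the laws of U_0, V_0, but not on the parameter sequence) such that sup_{t>=0} max( E[W_t^alpha], E[Y_t^alpha] ) <= C_alpha. -/

import Mathlib

open MeasureTheory ProbabilityTheory




lemma exp_sub_one_le : ∀ x : ℝ, Real.exp x - 1 ≤ x * Real.exp x := by
  intro x
  have h1 : (-x) + 1 ≤ Real.exp (-x) := Real.add_one_le_exp (-x)
  have h2 : Real.exp (-x) * Real.exp x = 1 := by rw [← Real.exp_add]; simp
  nlinarith [Real.exp_pos x]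

lemma exp_quad : ∀ x : ℝ, Real.exp x ≤ 1 + x + x ^ 2 * Real.exp |x| := by
  intro x
  have key := exp_sub_one_le x
  rcases le_or_gt 0 x with hx | hx
  · rw [abs_of_nonneg hx]
    nlinarith [Real.exp_pos x, mul_nonneg hx (sub_nonneg.2 (by nlinarith [Real.add_one_le_exp x] : (1:ℝ) ≤ Real.exp x))]
  · rw [abs_of_neg hx]
    have h3 : 1 - Real.exp x ≤ -x := by nlinarith [Real.add_one_le_exp x]
    have h4 : 1 ≤ Real.exp (-x) := Real.one_le_exp (by linarith)
    nlinarith [Real.exp_pos x]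

lemma sq_le_exp : ∀ x : ℝ, 0 ≤ x → x ^ 2 ≤ 4 * Real.exp x := by
  intro x hx
  have h1 : x / 2 + 1 ≤ Real.exp (x / 2) := Real.add_one_le_exp _
  have h2 : Real.exp (x / 2) * Real.exp (x / 2) = Real.exp x := by
    rw [← Real.exp_add]; ring_nf
  nlinarith [Real.exp_pos (x / 2)]

lemma rpow_le_exp_aux {x θ α : ℝ} (hx : 0 ≤ x) (hθ : 0 < θ) (hα : 1 ≤ α) :
    x ^ α ≤ (α / θ) ^ α * Real.exp (θ * x) := by
  have hα0 : 0 < α := lt_of_lt_of_le one_pos hα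
  have h1 : x = (α / θ) * (θ * x / α) := by field_simp
  have h2 : (0:ℝ) ≤ α / θ := by positivity
  have h3 : (0:ℝ) ≤ θ * x / α := by positivity
  calc x ^ α = ((α / θ) * (θ * x / α)) ^ α := by rw [← h1]
    _ = (α / θ) ^ α * (θ * x / α) ^ α := Real.mul_rpow h2 h3
    _ ≤ (α / θ) ^ α * (Real.exp (θ * x / α)) ^ α := by
        apply mul_le_mul_of_nonneg_left _ (Real.rpow_nonneg h2 α)
        exact Real.rpow_le_rpow h3 (by linarith [Real.add_one_le_exp (θ * x / α)]) hα0.le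
    _ = (α / θ) ^ α * Real.exp (θ * x) := by
        rw [← Real.exp_mul]
        congr 1
        field_simp


noncomputable def wrec (w a b : ℝ) (u v : ℕ → ℝ) : ℕ → ℝ
  | 0 => w
  | t + 1 => max (wrec w a b u v t + a * v t - b * u t) 0

noncomputable def yrec (w yy a b l : ℝ) (u v : ℕ → ℝ) : ℕ → ℝ
  | 0 => yy
  | t + 1 => if 0 < wrec w a b u v (t + 1) then yrec w yy a b l u v t + u t / l else 0

lemma wrec_congr {w a b : ℝ} {u v u' v' : ℕ → ℝ} :
    ∀ t, (∀ s, s < t → u s = u' s) → (∀ s, s < t → v s = v' s) →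
      wrec w a b u v t = wrec w a b u' v' t
  | 0, _, _ => rfl
  | t + 1, hu, hv => by
    simp only [wrec,
      wrec_congr t (fun s hs => hu s (by omega)) (fun s hs => hv s (by omega)),
      hu t (by omega), hv t (by omega)]

lemma yrec_congr {w yy a b l : ℝ} {u v u' v' : ℕ → ℝ} :
    ∀ t, (∀ s, s < t → u s = u' s) → (∀ s, s < t → v s = v' s) →
      yrec w yy a b l u v t = yrec w yy a b l u' v' t
  | 0, _, _ => rfl
  | t + 1, hu, hv => by
    simp only [yrec,
      yrec_congr t (fun s hs => hu s (by omega)) (fun s hs => hv s (by omega)),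
      wrec_congr (t + 1) hu hv, hu t (by omega)]

lemma wrec_meas {γ : Type*} [MeasurableSpace γ] {w a b : ℝ} {u v : γ → ℕ → ℝ}
    (hu : ∀ s, Measurable fun g => u g s) (hv : ∀ s, Measurable fun g => v g s) :
    ∀ t, Measurable fun g => wrec w a b (u g) (v g) t
  | 0 => measurable_const
  | t + 1 => by
    simp only [wrec]
    exact (((wrec_meas hu hv t).add ((hv t).const_mul a)).sub
      ((hu t).const_mul b)).max measurable_const

lemma yrec_meas {γ : Type*} [MeasurableSpace γ] {w yy a b l : ℝ} {u v : γ → ℕ → ℝ}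
    (hu : ∀ s, Measurable fun g => u g s) (hv : ∀ s, Measurable fun g => v g s) :
    ∀ t, Measurable fun g => yrec w yy a b l (u g) (v g) t
  | 0 => measurable_const
  | t + 1 => by
    simp only [yrec]
    refine Measurable.ite ?_ ((yrec_meas hu hv t).add ((hu t).div_const l)) measurable_const
    exact measurableSet_lt measurable_const (wrec_meas hu hv (t + 1))

lemma wrec_nonneg {w a b : ℝ} {u v : ℕ → ℝ} (hw : 0 ≤ w) :
    ∀ t, 0 ≤ wrec w a b u v t
  | 0 => hw
  | t + 1 => le_max_right _ _

lemma yrec_nonneg {w yy a b l : ℝ} {u v : ℕ → ℝ} (hy : 0 ≤ yy) (hl : 0 < l)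
    (hu : ∀ s, 0 ≤ u s) : ∀ t, 0 ≤ yrec w yy a b l u v t
  | 0 => hy
  | t + 1 => by
    simp only [yrec]
    split
    · exact add_nonneg (yrec_nonneg hy hl hu t) (div_nonneg (hu t) hl.le)
    · exact le_rfl
lemma G_pointwise {θ θ0 p q : ℝ} (hθ : 0 < θ) (hθ0 : θ ≤ θ0) (hp : 0 ≤ p) (hq : 0 ≤ q) :
    Real.exp (θ * (p - q)) ≤ 1 + θ * (p - q)
      + θ ^ 2 * (4 / θ0 ^ 2) * (Real.exp (2 * θ0 * p) * Real.exp (2 * θ0 * q)) := by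
  have hθ00 : 0 < θ0 := lt_of_lt_of_le hθ hθ0
  set r := p - q with hr
  have habs : |r| ≤ p + q := abs_le.2 ⟨by simp only [hr]; linarith, by simp only [hr]; linarith⟩
  have h1 : Real.exp (θ * r) ≤ 1 + θ * r + (θ * r) ^ 2 * Real.exp |θ * r| := exp_quad _
  have h2 : |θ * r| = θ * |r| := by rw [abs_mul, abs_of_pos hθ]
  have h3 : Real.exp (θ * |r|) ≤ Real.exp (θ0 * |r|) :=
    Real.exp_le_exp.2 (mul_le_mul_of_nonneg_right hθ0 (abs_nonneg r))
  have h4 : θ0 ^ 2 * r ^ 2 ≤ 4 * Real.exp (θ0 * |r|) := by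
    have h5 := sq_le_exp (θ0 * |r|) (by positivity)
    calc θ0 ^ 2 * r ^ 2 = (θ0 * |r|) ^ 2 := by rw [mul_pow, sq_abs]
      _ ≤ 4 * Real.exp (θ0 * |r|) := h5
  have h6 : Real.exp (θ0 * |r|) * Real.exp (θ0 * |r|)
      ≤ Real.exp (2 * θ0 * p) * Real.exp (2 * θ0 * q) := by
    rw [← Real.exp_add, ← Real.exp_add]
    apply Real.exp_le_exp.2
    nlinarith [abs_nonneg r]
  have hr2 : r ^ 2 ≤ 4 / θ0 ^ 2 * Real.exp (θ0 * |r|) := by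
    rw [div_mul_eq_mul_div, le_div_iff₀ (by positivity)]
    nlinarith
  have h7 : (θ * r) ^ 2 * Real.exp |θ * r|
      ≤ θ ^ 2 * (4 / θ0 ^ 2) * (Real.exp (2 * θ0 * p) * Real.exp (2 * θ0 * q)) := by
    rw [h2, mul_pow]
    have s1 : r ^ 2 * Real.exp (θ * |r|) ≤ r ^ 2 * Real.exp (θ0 * |r|) :=
      mul_le_mul_of_nonneg_left h3 (sq_nonneg r)
    have s2 : r ^ 2 * Real.exp (θ0 * |r|)
        ≤ (4 / θ0 ^ 2) * (Real.exp (θ0 * |r|) * Real.exp (θ0 * |r|)) := by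
      calc r ^ 2 * Real.exp (θ0 * |r|)
          ≤ (4 / θ0 ^ 2 * Real.exp (θ0 * |r|)) * Real.exp (θ0 * |r|) :=
            mul_le_mul_of_nonneg_right hr2 (Real.exp_pos _).le
        _ = (4 / θ0 ^ 2) * (Real.exp (θ0 * |r|) * Real.exp (θ0 * |r|)) := by ring
    have s3 : r ^ 2 * Real.exp (θ0 * |r|)
        ≤ (4 / θ0 ^ 2) * (Real.exp (2 * θ0 * p) * Real.exp (2 * θ0 * q)) :=
      le_trans s2 (mul_le_mul_of_nonneg_left h6 (by positivity))
    calc θ ^ 2 * r ^ 2 * Real.exp (θ * |r|)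
        = θ ^ 2 * (r ^ 2 * Real.exp (θ * |r|)) := by ring
      _ ≤ θ ^ 2 * (r ^ 2 * Real.exp (θ0 * |r|)) := mul_le_mul_of_nonneg_left s1 (sq_nonneg θ)
      _ ≤ θ ^ 2 * ((4 / θ0 ^ 2) * (Real.exp (2 * θ0 * p) * Real.exp (2 * θ0 * q))) :=
          mul_le_mul_of_nonneg_left s3 (sq_nonneg θ)
      _ = θ ^ 2 * (4 / θ0 ^ 2) * (Real.exp (2 * θ0 * p) * Real.exp (2 * θ0 * q)) := by ring
  calc Real.exp (θ * r) ≤ 1 + θ * r + (θ * r) ^ 2 * Real.exp |θ * r| := h1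
    _ ≤ 1 + θ * r + θ ^ 2 * (4 / θ0 ^ 2) * (Real.exp (2 * θ0 * p) * Real.exp (2 * θ0 * q)) := by linarith

set_option maxHeartbeats 1000000 in
/-- uniformly bounded moments of all orders `α ≥ 1` for the GI/GI/1
waiting-time and observed-busy-period processes driven by an arbitrary
(box-constrained) random parameter sequence. -/
theorem stmt6
    {Ω : Type*} [MeasureSpace Ω] [IsProbabilityMeasure (ℙ : Measure Ω)]
    (U V : ℕ → Ω → ℝ)
    (hUmeas : ∀ n, Measurable (U n)) (hVmeas : ∀ n, Measurable (V n))
    (hindep : iIndepFun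
      (fun i : ℕ ⊕ ℕ => Sum.elim U V i) ℙ)
    (hUnonneg : ∀ n ω, 0 ≤ U n ω) (hVnonneg : ∀ n ω, 0 ≤ V n ω)
    (hUid : ∀ n, IdentDistrib (U n) (U 0) ℙ ℙ)
    (hVid : ∀ n, IdentDistrib (V n) (V 0) ℙ ℙ)
    (hUmean : ∫ ω, U 0 ω ∂ℙ = 1) (hVmean : ∫ ω, V 0 ω ∂ℙ = 1)
    (η : ℝ) (hη : 0 < η)
    (hUexp : Integrable (fun ω => Real.exp (η * U 0 ω)) ℙ)
    (hVexp : Integrable (fun ω => Real.exp (η * V 0 ω)) ℙ)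
    (lam_l lam_u mu_l mu_u : ℝ)
    (hlam_l : 0 < lam_l) (hlam : lam_l ≤ lam_u) (hstab : lam_u < mu_l)
    (hmu : mu_l ≤ mu_u)
    (w y : ℝ) (hw : 0 ≤ w) (hy : 0 ≤ y) :
    ∀ α : ℝ, 1 ≤ α →
      ∃ C : ℝ,
        ∀ lamSeq muSeq : ℕ → Ω → ℝ,
          (∀ t, Measurable (lamSeq t)) → (∀ t, Measurable (muSeq t)) →
          (∀ t ω, lamSeq t ω ∈ Set.Icc lam_l lam_u) →
          (∀ t ω, muSeq t ω ∈ Set.Icc mu_l mu_u) →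
          ∀ W Y : ℕ → Ω → ℝ,
            (∀ t, Measurable (W t)) → (∀ t, Measurable (Y t)) →
            (∀ ω, W 0 ω = w) → (∀ ω, Y 0 ω = y) →
            (∀ t ω, W (t + 1) ω =
              max (W t ω + V t ω / muSeq t ω - U t ω / lamSeq t ω) 0) →
            (∀ t ω, Y (t + 1) ω =
              if 0 < W (t + 1) ω then Y t ω + U t ω / lamSeq t ω else 0) →
            ∀ t : ℕ,
              (∫ ω, W t ω ^ α ∂ℙ) ≤ C ∧ (∫ ω, Y t ω ^ α ∂ℙ) ≤ C := by
  classical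
  intro α hα
  have hα0 : (0:ℝ) < α := lt_of_lt_of_le one_pos hα
  have hlu : 0 < lam_u := lt_of_lt_of_le hlam_l hlam
  have hml : 0 < mu_l := lt_trans hlu hstab
  -- constants
  set a : ℝ := mu_l⁻¹ with ha_def
  set b : ℝ := lam_u⁻¹ with hb_def
  have ha0 : 0 < a := inv_pos.2 hml
  have hb0 : 0 < b := inv_pos.2 hlu
  have hab : a < b := inv_strictAnti₀ hlu hstab
  set δ : ℝ := (b - a) / 2 with hδ_def
  set c : ℝ := (a + b) / 2 with hc_def
  have hδ0 : 0 < δ := by rw [hδ_def]; linarith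
  have hc0 : 0 < c := by rw [hc_def]; linarith
  set θ0 : ℝ := η / (2 * (a + c)) with hθ0_def
  have hθ00 : 0 < θ0 := by rw [hθ0_def]; positivity
  have hθ0ac : 2 * θ0 * (a + c) = η := by
    rw [hθ0_def]; field_simp
  have h2a : 2 * θ0 * a ≤ η := by nlinarith [mul_pos hθ00 hc0]
  have h2c : 2 * θ0 * c ≤ η := by nlinarith [mul_pos hθ00 ha0]
  -- integrability of exponentials of U 0, V 0 with smaller exponents
  have hexpV : ∀ s : ℝ, 0 ≤ s → s ≤ η → Integrable (fun ω => Real.exp (s * V 0 ω)) ℙ := by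
    intro s hs0 hsη
    refine hVexp.mono' ((hVmeas 0).const_mul s).exp.aestronglyMeasurable ?_
    filter_upwards with ω
    rw [Real.norm_eq_abs, abs_of_pos (Real.exp_pos _)]
    exact Real.exp_le_exp.2 (mul_le_mul_of_nonneg_right hsη (hVnonneg 0 ω))
  have hexpU : ∀ s : ℝ, 0 ≤ s → s ≤ η → Integrable (fun ω => Real.exp (s * U 0 ω)) ℙ := by
    intro s hs0 hsη
    refine hUexp.mono' ((hUmeas 0).const_mul s).exp.aestronglyMeasurable ?_
    filter_upwards with ω
    rw [Real.norm_eq_abs, abs_of_pos (Real.exp_pos _)]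
    exact Real.exp_le_exp.2 (mul_le_mul_of_nonneg_right hsη (hUnonneg 0 ω))
  -- identically distributed exponentials
  have hVidc : ∀ (t : ℕ) (s : ℝ), IdentDistrib (fun ω => Real.exp (s * V t ω))
      (fun ω => Real.exp (s * V 0 ω)) ℙ ℙ := fun t s =>
    (hVid t).comp ((measurable_id.const_mul s).exp)
  have hUidc : ∀ (t : ℕ) (s : ℝ), IdentDistrib (fun ω => Real.exp (s * U t ω))
      (fun ω => Real.exp (s * U 0 ω)) ℙ ℙ := fun t s =>
    (hUid t).comp ((measurable_id.const_mul s).exp)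
  -- integrability and means of U t, V t
  have hVint0 : Integrable (V 0) ℙ := by
    refine (hVexp.div_const η).mono' (hVmeas 0).aestronglyMeasurable ?_
    filter_upwards with ω
    rw [Real.norm_eq_abs, abs_of_nonneg (hVnonneg 0 ω), le_div_iff₀ hη]
    nlinarith [Real.add_one_le_exp (η * V 0 ω)]
  have hUint0 : Integrable (U 0) ℙ := by
    refine (hUexp.div_const η).mono' (hUmeas 0).aestronglyMeasurable ?_
    filter_upwards with ω
    rw [Real.norm_eq_abs, abs_of_nonneg (hUnonneg 0 ω), le_div_iff₀ hη]
    nlinarith [Real.add_one_le_exp (η * U 0 ω)]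
  have hVtint : ∀ t, Integrable (V t) ℙ := fun t => (hVid t).integrable_iff.2 hVint0
  have hUtint : ∀ t, Integrable (U t) ℙ := fun t => (hUid t).integrable_iff.2 hUint0
  have hVtmean : ∀ t, ∫ ω, V t ω ∂ℙ = 1 := fun t => by rw [(hVid t).integral_eq]; exact hVmean
  have hUtmean : ∀ t, ∫ ω, U t ω ∂ℙ = 1 := fun t => by rw [(hUid t).integral_eq]; exact hUmean
  -- the constants K, θ, ρ, β, D
  set KV : ℝ := ∫ ω, Real.exp (2 * θ0 * a * V 0 ω) ∂ℙ with hKV_def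
  set KU : ℝ := ∫ ω, Real.exp (2 * θ0 * c * U 0 ω) ∂ℙ with hKU_def
  have hKVint : Integrable (fun ω => Real.exp (2 * θ0 * a * V 0 ω)) ℙ :=
    hexpV _ (by positivity) h2a
  have hKUint : Integrable (fun ω => Real.exp (2 * θ0 * c * U 0 ω)) ℙ :=
    hexpU _ (by positivity) h2c
  have hKV1 : 1 ≤ KV := by
    rw [hKV_def]
    calc (1:ℝ) = ∫ _ω, (1:ℝ) ∂ℙ := by simp
      _ ≤ _ := integral_mono (integrable_const 1) hKVint
          (fun ω => Real.one_le_exp (mul_nonneg (by positivity) (hVnonneg 0 ω)))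
  have hKU1 : 1 ≤ KU := by
    rw [hKU_def]
    calc (1:ℝ) = ∫ _ω, (1:ℝ) ∂ℙ := by simp
      _ ≤ _ := integral_mono (integrable_const 1) hKUint
          (fun ω => Real.one_le_exp (mul_nonneg (by positivity) (hUnonneg 0 ω)))
  set K : ℝ := 4 / θ0 ^ 2 * (KV * KU) with hK_def
  have hK0 : 0 < K := by rw [hK_def]; positivity
  set θ : ℝ := min θ0 (δ / (2 * K)) with hθ_def
  have hθpos : 0 < θ := lt_min hθ00 (by positivity)
  have hθθ0 : θ ≤ θ0 := min_le_left _ _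
  have hθK : θ * K ≤ δ / 2 := by
    have h := min_le_right θ0 (δ / (2 * K))
    calc θ * K ≤ δ / (2 * K) * K := mul_le_mul_of_nonneg_right h hK0.le
      _ = δ / 2 := by field_simp [hK0.ne'] <;> ring
  set ρ : ℝ := max (1 - θ * δ / 2) 0 with hρ_def
  have hρ0 : 0 ≤ ρ := le_max_right _ _
  set β : ℝ := θ * lam_l * δ with hβ_def
  have hβ0 : 0 < β := by rw [hβ_def]; positivity
  set D : ℝ := Real.exp (θ * w + β * y) + 2 / (θ * δ) + 1 with hD_def
  have hD1 : 1 ≤ D := by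
    rw [hD_def]
    have := Real.exp_pos (θ * w + β * y)
    have : 0 < 2 / (θ * δ) := by positivity
    linarith [Real.exp_pos (θ * w + β * y)]
  have h1ρD : 1 + D * ρ ≤ D := by
    rcases max_cases (1 - θ * δ / 2) 0 with ⟨hm, hc'⟩ | ⟨hm, hc'⟩
    · rw [hρ_def, hm]
      have hD2 : 2 / (θ * δ) ≤ D := by
        rw [hD_def]; linarith [Real.exp_pos (θ * w + β * y)]
      have hθδ : θ * δ ≠ 0 := (mul_pos hθpos hδ0).ne'
      have key : 2 / (θ * δ) * (θ * δ / 2) = 1 := by field_simp [hθpos.ne', hδ0.ne']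
      nlinarith [mul_pos hθpos hδ0]
    · rw [hρ_def, hm]; linarith
  -- the dominating processes
  set Wb : ℕ → Ω → ℝ := fun t ω => wrec w a b (fun s => U s ω) (fun s => V s ω) t with hWb_def
  set Yb : ℕ → Ω → ℝ := fun t ω => yrec w y a b lam_l (fun s => U s ω) (fun s => V s ω) t
    with hYb_def
  set Z : ℕ → Ω → ℝ := fun t ω => Real.exp (θ * Wb t ω + β * Yb t ω) with hZ_def
  set G : ℕ → Ω → ℝ := fun t ω => Real.exp (θ * a * V t ω - θ * c * U t ω) with hG_def
  have hWbm : ∀ t, Measurable (Wb t) := fun t =>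
    wrec_meas (u := fun ω s => U s ω) (v := fun ω s => V s ω)
      (fun s => hUmeas s) (fun s => hVmeas s) t
  have hYbm : ∀ t, Measurable (Yb t) := fun t =>
    yrec_meas (u := fun ω s => U s ω) (v := fun ω s => V s ω)
      (fun s => hUmeas s) (fun s => hVmeas s) t
  have hZm : ∀ t, Measurable (Z t) := fun t =>
    (((hWbm t).const_mul θ).add ((hYbm t).const_mul β)).exp
  have hGm : ∀ t, Measurable (G t) := fun t =>
    (((hVmeas t).const_mul (θ * a)).sub ((hUmeas t).const_mul (θ * c))).exp
  have hWbnn : ∀ t ω, 0 ≤ Wb t ω := fun t ω => wrec_nonneg hw t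
  have hYbnn : ∀ t ω, 0 ≤ Yb t ω := fun t ω =>
    yrec_nonneg hy hlam_l (fun s => hUnonneg s ω) t
  have hZnn : ∀ t ω, 0 ≤ Z t ω := fun t ω => (Real.exp_pos _).le
  have hGnn : ∀ t ω, 0 ≤ G t ω := fun t ω => (Real.exp_pos _).le
  -- independence of Z t and G t
  have hmeasAll : ∀ i : ℕ ⊕ ℕ, Measurable (Sum.elim U V i) := by
    rintro (i | i)
    exacts [hUmeas i, hVmeas i]
  have hindepZG : ∀ t, IndepFun (Z t) (G t) ℙ := by
    intro t
    set S : Finset (ℕ ⊕ ℕ) := ((Finset.range t).image Sum.inl) ∪ ((Finset.range t).image Sum.inr)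
      with hS_def
    set T : Finset (ℕ ⊕ ℕ) := {Sum.inl t, Sum.inr t} with hT_def
    have hST : Disjoint S T := by
      rw [Finset.disjoint_left]
      intro i hiS hiT
      simp only [hS_def, hT_def, Finset.mem_union, Finset.mem_image, Finset.mem_range,
        Finset.mem_insert, Finset.mem_singleton] at hiS hiT
      rcases hiT with rfl | rfl <;> rcases hiS with ⟨s, hs, heq⟩ | ⟨s, hs, heq⟩ <;>
        simp_all <;> omega
    have base := hindep.indepFun_finset S T hST hmeasAll
    have hmemS : ∀ s, s < t → (Sum.inl s ∈ S ∧ Sum.inr s ∈ S) := by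
      intro s hs
      constructor <;> · simp [hS_def, Finset.mem_union, Finset.mem_image, hs]
    set uS : ({ x // x ∈ S } → ℝ) → ℕ → ℝ :=
      fun g s => if h : Sum.inl s ∈ S then g ⟨Sum.inl s, h⟩ else 0 with huS_def
    set vS : ({ x // x ∈ S } → ℝ) → ℕ → ℝ :=
      fun g s => if h : Sum.inr s ∈ S then g ⟨Sum.inr s, h⟩ else 0 with hvS_def
    have huSm : ∀ s, Measurable fun g => uS g s := by
      intro s
      rw [huS_def]
      by_cases h : Sum.inl s ∈ S
      · simp only [dif_pos h]; exact measurable_pi_apply _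
      · simp only [dif_neg h]; exact measurable_const
    have hvSm : ∀ s, Measurable fun g => vS g s := by
      intro s
      rw [hvS_def]
      by_cases h : Sum.inr s ∈ S
      · simp only [dif_pos h]; exact measurable_pi_apply _
      · simp only [dif_neg h]; exact measurable_const
    set φ : ({ x // x ∈ S } → ℝ) → ℝ := fun g =>
      Real.exp (θ * wrec w a b (uS g) (vS g) t + β * yrec w y a b lam_l (uS g) (vS g) t)
      with hφ_def
    have hφm : Measurable φ := by
      rw [hφ_def]
      exact (((wrec_meas huSm hvSm t).const_mul θ).add
        ((yrec_meas huSm hvSm t).const_mul β)).exp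
    have hmemT1 : (Sum.inl t : ℕ ⊕ ℕ) ∈ T := by simp [hT_def]
    have hmemT2 : (Sum.inr t : ℕ ⊕ ℕ) ∈ T := by simp [hT_def]
    set ψ : ({ x // x ∈ T } → ℝ) → ℝ := fun g =>
      Real.exp (θ * a * g ⟨Sum.inr t, hmemT2⟩ - θ * c * g ⟨Sum.inl t, hmemT1⟩) with hψ_def
    have hψm : Measurable ψ := by
      rw [hψ_def]
      fun_prop
    have hcomp := base.comp hφm hψm
    have hZeq : Z t = φ ∘ (fun ω (i : { x // x ∈ S }) => Sum.elim U V (i : ℕ ⊕ ℕ) ω) := by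
      funext ω
      simp only [Function.comp_apply, hφ_def, hZ_def, hWb_def, hYb_def]
      have hu : ∀ s, s < t → uS (fun i : { x // x ∈ S } => Sum.elim U V (i : ℕ ⊕ ℕ) ω) s
          = U s ω := by
        intro s hs
        rw [huS_def]
        simp only [dif_pos (hmemS s hs).1]
        rfl
      have hv : ∀ s, s < t → vS (fun i : { x // x ∈ S } => Sum.elim U V (i : ℕ ⊕ ℕ) ω) s
          = V s ω := by
        intro s hs
        rw [hvS_def]
        simp only [dif_pos (hmemS s hs).2]
        rfl
      rw [wrec_congr t hu hv, yrec_congr t hu hv]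
    have hGeq : G t = ψ ∘ (fun ω (i : { x // x ∈ T }) => Sum.elim U V (i : ℕ ⊕ ℕ) ω) := by
      funext ω
      simp only [Function.comp_apply, hψ_def, hG_def]
      rfl
    rw [hZeq, hGeq]
    exact hcomp
  -- pairwise independence of U t and V t
  have hindepUV : ∀ t, IndepFun (V t) (U t) ℙ := fun t =>
    hindep.indepFun (show (Sum.inr t : ℕ ⊕ ℕ) ≠ Sum.inl t by simp)
  -- integrability of G t
  have hθ0a : θ0 * a ≤ η := by nlinarith [mul_nonneg hθ00.le ha0.le]
  have hθ0c : θ0 * c ≤ η := by nlinarith [mul_nonneg hθ00.le hc0.le]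
  have hθa : θ * a ≤ η := le_trans (mul_le_mul_of_nonneg_right hθθ0 ha0.le) hθ0a
  have hθc : θ * c ≤ η := le_trans (mul_le_mul_of_nonneg_right hθθ0 hc0.le) hθ0c
  have hGint : ∀ t, Integrable (G t) ℙ := by
    intro t
    have hdom : Integrable (fun ω => Real.exp (θ * a * V t ω)) ℙ :=
      (hVidc t (θ * a)).integrable_iff.2 (hexpV (θ * a) (by positivity) hθa)
    refine hdom.mono' (hGm t).aestronglyMeasurable ?_
    filter_upwards with ω
    rw [Real.norm_eq_abs, abs_of_nonneg (hGnn t ω)]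
    show Real.exp (θ * a * V t ω - θ * c * U t ω) ≤ Real.exp (θ * a * V t ω)
    exact Real.exp_le_exp.2 (sub_le_self _ (mul_nonneg (by positivity) (hUnonneg t ω)))
  -- mean bound on G t
  have hGmean : ∀ t, ∫ ω, G t ω ∂ℙ ≤ ρ := by
    intro t
    have hVci : Integrable (fun ω => a * V t ω) ℙ := (hVtint t).const_mul a
    have hUci : Integrable (fun ω => c * U t ω) ℙ := (hUtint t).const_mul c
    have hRint : Integrable (fun ω => a * V t ω - c * U t ω) ℙ := hVci.sub hUci
    have hRmean : ∫ ω, (a * V t ω - c * U t ω) ∂ℙ = -δ := by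
      rw [integral_sub hVci hUci, integral_const_mul, integral_const_mul, hVtmean t, hUtmean t,
        hδ_def, hc_def]
      ring
    have i1 : Integrable (fun ω => Real.exp (2 * θ0 * a * V t ω)) ℙ :=
      (hVidc t _).integrable_iff.2 hKVint
    have i2 : Integrable (fun ω => Real.exp (2 * θ0 * c * U t ω)) ℙ :=
      (hUidc t _).integrable_iff.2 hKUint
    have hindE : IndepFun (fun ω => Real.exp (2 * θ0 * a * V t ω))
        (fun ω => Real.exp (2 * θ0 * c * U t ω)) ℙ :=
      (hindepUV t).comp ((measurable_id.const_mul (2 * θ0 * a)).exp)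
        ((measurable_id.const_mul (2 * θ0 * c)).exp)
    have hE2int : Integrable
        (fun ω => Real.exp (2 * θ0 * a * V t ω) * Real.exp (2 * θ0 * c * U t ω)) ℙ :=
      hindE.integrable_mul i1 i2
    have hE2mean : ∫ ω, Real.exp (2 * θ0 * a * V t ω) * Real.exp (2 * θ0 * c * U t ω) ∂ℙ
        = KV * KU := by
      have hmul := hindE.integral_fun_mul_eq_mul_integral i1.aestronglyMeasurable i2.aestronglyMeasurable
      rw [(hVidc t _).integral_eq, (hUidc t _).integral_eq] at hmul
      exact hmul
    have hpt : ∀ ω, G t ω ≤ 1 + θ * (a * V t ω - c * U t ω)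
        + θ ^ 2 * (4 / θ0 ^ 2) * (Real.exp (2 * θ0 * a * V t ω)
          * Real.exp (2 * θ0 * c * U t ω)) := by
      intro ω
      have h := G_pointwise (θ0 := θ0) (p := a * V t ω) (q := c * U t ω) hθpos hθθ0
        (mul_nonneg ha0.le (hVnonneg t ω)) (mul_nonneg hc0.le (hUnonneg t ω))
      have e2 : 2 * θ0 * (a * V t ω) = 2 * θ0 * a * V t ω := by ring
      have e3 : 2 * θ0 * (c * U t ω) = 2 * θ0 * c * U t ω := by ring
      rw [e2, e3] at h
      calc G t ω = Real.exp (θ * (a * V t ω - c * U t ω)) := by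
            show Real.exp (θ * a * V t ω - θ * c * U t ω) = _
            congr 1
            ring
        _ ≤ _ := h
    have hBint : Integrable (fun ω => 1 + θ * (a * V t ω - c * U t ω)
        + θ ^ 2 * (4 / θ0 ^ 2) * (Real.exp (2 * θ0 * a * V t ω)
          * Real.exp (2 * θ0 * c * U t ω))) ℙ :=
      ((integrable_const 1).add (hRint.const_mul θ)).add (hE2int.const_mul _)
    calc ∫ ω, G t ω ∂ℙ ≤ ∫ ω, (1 + θ * (a * V t ω - c * U t ω)
        + θ ^ 2 * (4 / θ0 ^ 2) * (Real.exp (2 * θ0 * a * V t ω)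
          * Real.exp (2 * θ0 * c * U t ω))) ∂ℙ := integral_mono (hGint t) hBint hpt
      _ = 1 + θ * (-δ) + θ ^ 2 * (4 / θ0 ^ 2) * (KV * KU) := by
          have hiA : Integrable (fun ω => 1 + θ * (a * V t ω - c * U t ω)) ℙ :=
            (integrable_const 1).add (hRint.const_mul θ)
          rw [integral_add hiA (hE2int.const_mul (θ ^ 2 * (4 / θ0 ^ 2))),
            integral_add (integrable_const 1) (hRint.const_mul θ), integral_const,
            integral_const_mul, hRmean, integral_const_mul, hE2mean]
          simp
      _ ≤ 1 - θ * δ / 2 := by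
          have : θ ^ 2 * (4 / θ0 ^ 2) * (KV * KU) = θ * (θ * K) := by rw [hK_def]; ring
          rw [this]
          have h1 : θ * (θ * K) ≤ θ * (δ / 2) := mul_le_mul_of_nonneg_left hθK hθpos.le
          linarith
      _ ≤ ρ := le_max_left _ _
  -- the exponential Lyapunov bound
  have hZ : ∀ t, Integrable (Z t) ℙ ∧ ∫ ω, Z t ω ∂ℙ ≤ D := by
    intro t
    induction t with
    | zero =>
      have hz0 : Z 0 = fun _ => Real.exp (θ * w + β * y) := rfl
      constructor
      · rw [hz0]; exact integrable_const _
      · rw [hz0, integral_const]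
        simp only [measure_univ, probReal_univ, one_smul]
        rw [hD_def]
        have : 0 < 2 / (θ * δ) := by positivity
        linarith
    | succ t ih =>
      obtain ⟨ihint, ihle⟩ := ih
      have hZGi : Integrable (fun ω => Z t ω * G t ω) ℙ :=
        (hindepZG t).integrable_mul ihint (hGint t)
      have hpt : ∀ ω, Z (t + 1) ω ≤ 1 + Z t ω * G t ω := by
        intro ω
        by_cases hpos : 0 < Wb (t + 1) ω
        · have hmax : 0 < wrec w a b (fun s => U s ω) (fun s => V s ω) (t + 1) := hpos
          have hx : 0 < wrec w a b (fun s => U s ω) (fun s => V s ω) t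
              + a * V t ω - b * U t ω := by
            by_contra hle
            push_neg at hle
            rw [show wrec w a b (fun s => U s ω) (fun s => V s ω) (t + 1)
              = max (wrec w a b (fun s => U s ω) (fun s => V s ω) t
                + a * V t ω - b * U t ω) 0 from rfl, max_eq_right hle] at hmax
            exact lt_irrefl 0 hmax
          have hW1 : Wb (t + 1) ω = Wb t ω + a * V t ω - b * U t ω := max_eq_left hx.le
          have hY1 : Yb (t + 1) ω = Yb t ω + U t ω / lam_l := if_pos hmax
          have hzz : Z (t + 1) ω = Z t ω * G t ω := by
            show Real.exp (θ * Wb (t + 1) ω + β * Yb (t + 1) ω)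
              = Real.exp (θ * Wb t ω + β * Yb t ω)
                * Real.exp (θ * a * V t ω - θ * c * U t ω)
            rw [hW1, hY1, ← Real.exp_add]
            congr 1
            rw [hβ_def, hc_def, hδ_def]
            field_simp [hlam_l.ne']
            ring
          rw [hzz]
          linarith [mul_nonneg (hZnn t ω) (hGnn t ω)]
        · have hmax : ¬ 0 < wrec w a b (fun s => U s ω) (fun s => V s ω) (t + 1) := hpos
          have hW1 : Wb (t + 1) ω = 0 :=
            le_antisymm (not_lt.1 hpos) (hWbnn _ _)
          have hY1 : Yb (t + 1) ω = 0 := if_neg hmax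
          have hzz : Z (t + 1) ω = 1 := by
            show Real.exp (θ * Wb (t + 1) ω + β * Yb (t + 1) ω) = 1
            rw [hW1, hY1]
            simp
          rw [hzz]
          linarith [mul_nonneg (hZnn t ω) (hGnn t ω)]
      have hZint1 : Integrable (Z (t + 1)) ℙ := by
        refine ((integrable_const (1:ℝ)).add hZGi).mono'
          (hZm (t + 1)).aestronglyMeasurable ?_
        filter_upwards with ω
        rw [Real.norm_eq_abs, abs_of_nonneg (hZnn _ _)]
        exact hpt ω
      refine ⟨hZint1, ?_⟩
      calc ∫ ω, Z (t + 1) ω ∂ℙ ≤ ∫ ω, (1 + Z t ω * G t ω) ∂ℙ :=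
            integral_mono hZint1 ((integrable_const 1).add hZGi) hpt
        _ = 1 + (∫ ω, Z t ω ∂ℙ) * (∫ ω, G t ω ∂ℙ) := by
            rw [integral_add (integrable_const 1) hZGi, integral_const]
            simp only [measure_univ, probReal_univ, smul_eq_mul, one_mul]
            congr 1
            exact (hindepZG t).integral_fun_mul_eq_mul_integral ihint.aestronglyMeasurable (hGint t).aestronglyMeasurable
        _ ≤ 1 + D * ρ := by
            have hZtnn : 0 ≤ ∫ ω, Z t ω ∂ℙ := integral_nonneg fun ω => hZnn t ω
            have h1 : (∫ ω, Z t ω ∂ℙ) * (∫ ω, G t ω ∂ℙ) ≤ (∫ ω, Z t ω ∂ℙ) * ρ :=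
              mul_le_mul_of_nonneg_left (hGmean t) hZtnn
            have h2 : (∫ ω, Z t ω ∂ℙ) * ρ ≤ D * ρ := mul_le_mul_of_nonneg_right ihle hρ0
            linarith
        _ ≤ D := h1ρD
  -- final constant
  refine ⟨((α / θ) ^ α + (α / β) ^ α) * D, ?_⟩
  intro lamSeq muSeq hlamm hmumm hlamBox hmuBox W Y hWm hYm hW0 hY0 hWrec hYrec t
  have hD0 : 0 ≤ D := le_trans zero_le_one hD1
  have hcθ : (0:ℝ) ≤ (α / θ) ^ α := Real.rpow_nonneg (by positivity) α
  have hcβ : (0:ℝ) ≤ (α / β) ^ α := Real.rpow_nonneg (by positivity) α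
  -- pathwise domination
  have hWnn : ∀ t ω, 0 ≤ W t ω := by
    intro t
    induction t with
    | zero => intro ω; rw [hW0]; exact hw
    | succ t ih => intro ω; rw [hWrec]; exact le_max_right _ _
  have hWle : ∀ t ω, W t ω ≤ Wb t ω := by
    intro t
    induction t with
    | zero => intro ω; rw [hW0]; exact le_refl w
    | succ t ih =>
      intro ω
      rw [hWrec]
      have hmupos : 0 < muSeq t ω := lt_of_lt_of_le hml (hmuBox t ω).1
      have hlpos : 0 < lamSeq t ω := lt_of_lt_of_le hlam_l (hlamBox t ω).1
      have h1 : V t ω / muSeq t ω ≤ a * V t ω := by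
        rw [ha_def, inv_mul_eq_div]
        exact div_le_div_of_nonneg_left (hVnonneg t ω) hml (hmuBox t ω).1
      have h2 : b * U t ω ≤ U t ω / lamSeq t ω := by
        rw [hb_def, inv_mul_eq_div]
        exact div_le_div_of_nonneg_left (hUnonneg t ω) hlpos (hlamBox t ω).2
      have h3 : W t ω + V t ω / muSeq t ω - U t ω / lamSeq t ω
          ≤ Wb t ω + a * V t ω - b * U t ω := by
        linarith [ih ω]
      calc max (W t ω + V t ω / muSeq t ω - U t ω / lamSeq t ω) 0
          ≤ max (Wb t ω + a * V t ω - b * U t ω) 0 := max_le_max h3 le_rfl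
        _ = Wb (t + 1) ω := rfl
  have hYle : ∀ t ω, Y t ω ≤ Yb t ω := by
    intro t
    induction t with
    | zero => intro ω; rw [hY0]; exact le_refl y
    | succ t ih =>
      intro ω
      rw [hYrec]
      by_cases hpos : 0 < W (t + 1) ω
      · rw [if_pos hpos]
        have hWbpos : 0 < Wb (t + 1) ω := lt_of_lt_of_le hpos (hWle (t + 1) ω)
        have hYb1 : Yb (t + 1) ω = Yb t ω + U t ω / lam_l :=
          if_pos (show 0 < wrec w a b (fun s => U s ω) (fun s => V s ω) (t + 1) from hWbpos)
        have hlpos : 0 < lamSeq t ω := lt_of_lt_of_le hlam_l (hlamBox t ω).1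
        have h2 : U t ω / lamSeq t ω ≤ U t ω / lam_l :=
          div_le_div_of_nonneg_left (hUnonneg t ω) hlam_l (hlamBox t ω).1
        rw [hYb1]
        exact add_le_add (ih ω) h2
      · rw [if_neg hpos]
        exact hYbnn (t + 1) ω
  have hYnn : ∀ t ω, 0 ≤ Y t ω := by
    intro t
    induction t with
    | zero => intro ω; rw [hY0]; exact hy
    | succ t ih =>
      intro ω
      rw [hYrec]
      by_cases hpos : 0 < W (t + 1) ω
      · rw [if_pos hpos]
        have hlpos : 0 < lamSeq t ω := lt_of_lt_of_le hlam_l (hlamBox t ω).1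
        exact add_nonneg (ih ω) (div_nonneg (hUnonneg t ω) hlpos.le)
      · rw [if_neg hpos]
  constructor
  · -- bound for W
    have hptW : ∀ ω, W t ω ^ α ≤ (α / θ) ^ α * Z t ω := by
      intro ω
      calc W t ω ^ α ≤ Wb t ω ^ α :=
            Real.rpow_le_rpow (hWnn t ω) (hWle t ω) hα0.le
        _ ≤ (α / θ) ^ α * Real.exp (θ * Wb t ω) := rpow_le_exp_aux (hWbnn t ω) hθpos hα
        _ ≤ (α / θ) ^ α * Z t ω := by
            apply mul_le_mul_of_nonneg_left _ hcθ
            show Real.exp (θ * Wb t ω) ≤ Real.exp (θ * Wb t ω + β * Yb t ω)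
            exact Real.exp_le_exp.2 (le_add_of_nonneg_right (mul_nonneg hβ0.le (hYbnn t ω)))
    calc ∫ ω, W t ω ^ α ∂ℙ ≤ ∫ ω, (α / θ) ^ α * Z t ω ∂ℙ :=
          integral_mono_of_nonneg
            (Filter.Eventually.of_forall fun ω => Real.rpow_nonneg (hWnn t ω) α)
            ((hZ t).1.const_mul _)
            (Filter.Eventually.of_forall hptW)
      _ = (α / θ) ^ α * ∫ ω, Z t ω ∂ℙ := integral_const_mul _ _
      _ ≤ (α / θ) ^ α * D := mul_le_mul_of_nonneg_left (hZ t).2 hcθ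
      _ ≤ ((α / θ) ^ α + (α / β) ^ α) * D :=
          mul_le_mul_of_nonneg_right (by linarith) hD0
  · -- bound for Y
    have hptY : ∀ ω, Y t ω ^ α ≤ (α / β) ^ α * Z t ω := by
      intro ω
      calc Y t ω ^ α ≤ Yb t ω ^ α :=
            Real.rpow_le_rpow (hYnn t ω) (hYle t ω) hα0.le
        _ ≤ (α / β) ^ α * Real.exp (β * Yb t ω) := rpow_le_exp_aux (hYbnn t ω) hβ0 hα
        _ ≤ (α / β) ^ α * Z t ω := by
            apply mul_le_mul_of_nonneg_left _ hcβ
            show Real.exp (β * Yb t ω) ≤ Real.exp (θ * Wb t ω + β * Yb t ω)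
            exact Real.exp_le_exp.2 (le_add_of_nonneg_left (mul_nonneg hθpos.le (hWbnn t ω)))
    calc ∫ ω, Y t ω ^ α ∂ℙ ≤ ∫ ω, (α / β) ^ α * Z t ω ∂ℙ :=
          integral_mono_of_nonneg
            (Filter.Eventually.of_forall fun ω => Real.rpow_nonneg (hYnn t ω) α)
            ((hZ t).1.const_mul _)
            (Filter.Eventually.of_forall hptY)
      _ = (α / β) ^ α * ∫ ω, Z t ω ∂ℙ := integral_const_mul _ _
      _ ≤ (α / β) ^ α * D := mul_le_mul_of_nonneg_left (hZ t).2 hcβ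
      _ ≤ ((α / θ) ^ α + (α / β) ^ α) * D :=
          mul_le_mul_of_nonneg_right (by linarith) hD0
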